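/- For every k ≥ 2, the subgroup K_k of G_{k+1}^k contains the commutator subgroup of H_k; that is, for all x, y ∈ H_k the commutator x⁻¹y⁻¹xy lies in K_k (equivalently ⁅H_k, H_k⁆ ≤ K_k). -/

import Mathlib

/-- The relators of the group `G_{k+1}^k`: the squares `b_i²` of all generators, together with
`(b_{σ(1)} b_{σ(2)} ⋯ b_{σ(k+1)})²` for every permutation `σ` of the `k+1` generators. -/
def relsG (k : ℕ) : Set (FreeGroup (Fin (k + 1))) :=
  (Set.range fun i : Fin (k + 1) => FreeGroup.of i ^ 2) ∪
    (Set.range fun σ : Equiv.Perm (Fin (k + 1)) =>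
      ((List.ofFn fun j : Fin (k + 1) => FreeGroup.of (σ j)).prod) ^ 2)

/-- The group `G_{k+1}^k`. -/
abbrev Gnk (k : ℕ) : Type := PresentedGroup (relsG k)

/-- The subgroup `H_k` of `G_{k+1}^k` generated by the (images of the) first `k` generators
`b_1, …, b_k`. -/
def Hk (k : ℕ) : Subgroup (Gnk k) :=
  Subgroup.closure (Set.range fun i : Fin k =>
    PresentedGroup.of (rels := relsG k) (Fin.castSucc i))

/-- The subgroup `K_k` of `G_{k+1}^k` generated by the products
`B_σ = b_{σ(1)} b_{σ(2)} ⋯ b_{σ(k)}` over all permutations `σ` of `{1, …, k}`. -/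
def Kk (k : ℕ) : Subgroup (Gnk k) :=
  Subgroup.closure (Set.range fun σ : Equiv.Perm (Fin k) =>
    ((List.ofFn fun j : Fin k =>
      PresentedGroup.of (rels := relsG k) (Fin.castSucc (σ j))).prod))

namespace Stmt10Aux

open scoped commutatorElement

/-- The images of the first `k` generators. -/
def g (k : ℕ) (i : Fin k) : Gnk k :=
  PresentedGroup.of (rels := relsG k) (Fin.castSucc i)

lemma g_sq (k : ℕ) (i : Fin k) : g k i * g k i = 1 := by
  have hr : (FreeGroup.of (Fin.castSucc i) ^ 2 : FreeGroup (Fin (k+1))) ∈ relsG k :=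
    Set.mem_union_left _ ⟨Fin.castSucc i, rfl⟩
  have h1 : PresentedGroup.mk (relsG k) (FreeGroup.of (Fin.castSucc i) ^ 2) = 1 :=
    (QuotientGroup.eq_one_iff _).2 (Subgroup.subset_normalClosure hr)
  rw [map_pow, pow_two] at h1
  exact h1

lemma g_inv (k : ℕ) (i : Fin k) : (g k i)⁻¹ = g k i :=
  inv_eq_of_mul_eq_one_right (g_sq k i)

lemma g_mul_g (k : ℕ) (i : Fin k) (y : Gnk k) : g k i * (g k i * y) = y := by
  rw [← mul_assoc, g_sq, one_mul]

lemma revprod (k : ℕ) (l : List (Fin k)) :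
    ((l.reverse).map (g k)).prod = ((l.map (g k)).prod)⁻¹ := by
  induction l with
  | nil => simp
  | cons a t ih =>
    simp only [List.reverse_cons, List.map_append, List.prod_append, ih, List.map_cons,
      List.map_nil, List.prod_cons, List.prod_nil, mul_one, mul_inv_rev, g_inv]

lemma memK (k : ℕ) (l : List (Fin k)) (h1 : l.Nodup) (h2 : l.length = k) :
    (l.map (g k)).prod ∈ Kk k := by
  have hinj : Function.Injective (fun j : Fin k => l.get (Fin.cast h2.symm j)) :=
    (List.nodup_iff_injective_get.1 h1).comp (Fin.cast_injective _)
  let σ : Equiv.Perm (Fin k) :=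
    Equiv.ofBijective _ ((Finite.injective_iff_bijective).1 hinj)
  apply Subgroup.subset_closure
  refine ⟨σ, ?_⟩
  show (List.ofFn fun j : Fin k =>
      PresentedGroup.of (rels := relsG k) (Fin.castSucc (σ j))).prod = (l.map (g k)).prod
  have he : (List.ofFn fun j : Fin k =>
      PresentedGroup.of (rels := relsG k) (Fin.castSucc (σ j))) = l.map (g k) := by
    apply List.ext_getElem
    · simp [h2]
    · intro n hn1 hn2
      simp [σ, Equiv.ofBijective, g, List.get]
  rw [he]

lemma mem_of_full (k : ℕ) {l : List (Fin k)} (h1 : l.Nodup) (h2 : l.length = k)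
    (x : Fin k) : x ∈ l := by
  have hu : l.toFinset = Finset.univ := by
    apply Finset.eq_univ_of_card
    rw [List.toFinset_card_of_nodup h1, h2, Fintype.card_fin]
  exact List.mem_toFinset.1 (hu ▸ Finset.mem_univ x)

lemma length_of_full (k : ℕ) {l : List (Fin k)} (h1 : l.Nodup) (h : ∀ x, x ∈ l) :
    l.length = k := by
  have hu : l.toFinset = Finset.univ := Finset.eq_univ_iff_forall.2 fun x =>
    List.mem_toFinset.2 (h x)
  have := List.toFinset_card_of_nodup h1
  rw [hu, Finset.card_univ, Fintype.card_fin] at this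
  omega

/-- conjugates of basic commutators by nodup words are products of two K-generators -/
lemma conjComm (k : ℕ) (w : List (Fin k)) (m a : Fin k) (hma : m ≠ a) (hw : w.Nodup)
    (hm : m ∉ w) (ha : a ∉ w) :
    (w.map (g k)).prod * (g k m * g k a * g k m * g k a) * ((w.map (g k)).prod)⁻¹ ∈ Kk k := by
  classical
  set R : List (Fin k) := (List.finRange k).filter (fun x => x ∉ m :: a :: w) with hR
  have hRnd : R.Nodup := (List.nodup_finRange k).filter _
  have hRmem : ∀ x : Fin k, x ∈ R ↔ ¬(x = m ∨ x = a ∨ x ∈ w) := by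
    intro x; simp [hR]
  set l1 : List (Fin k) := w ++ m :: a :: R with hl1
  set l2 : List (Fin k) := R.reverse ++ m :: a :: w.reverse with hl2
  have h1nd : l1.Nodup := by
    rw [hl1, List.nodup_append]
    refine ⟨hw, ?_, ?_⟩
    · simp only [List.nodup_cons]
      refine ⟨?_, ?_, hRnd⟩
      · simp only [List.mem_cons, hRmem]; tauto
      · simp only [hRmem]; tauto
    · intro x hx
      intro y hy hxy; subst hxy; revert hy
      simp only [List.mem_cons, hRmem]
      rintro (rfl | rfl | hxR)
      · exact hm hx
      · exact ha hx
      · exact hxR (Or.inr (Or.inr hx))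
  have h1len : l1.length = k := by
    apply length_of_full k h1nd
    intro x
    rw [hl1]
    simp only [List.mem_append, List.mem_cons, hRmem]
    tauto
  have h2nd : l2.Nodup := by
    rw [hl2, List.nodup_append]
    refine ⟨List.nodup_reverse.2 hRnd, ?_, ?_⟩
    · simp only [List.nodup_cons, List.mem_cons, List.mem_reverse, List.nodup_reverse]
      exact ⟨by tauto, ha, hw⟩
    · intro x hx
      rw [List.mem_reverse] at hx
      rw [hRmem] at hx
      simp only [List.mem_cons, List.mem_reverse]
      intro b hb hxb; subst hxb; tauto
  have h2len : l2.length = k := by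
    apply length_of_full k h2nd
    intro x
    rw [hl2]
    simp only [List.mem_append, List.mem_cons, List.mem_reverse, hRmem]
    tauto
  have key : (l1.map (g k)).prod * (l2.map (g k)).prod =
      (w.map (g k)).prod * (g k m * g k a * g k m * g k a) * ((w.map (g k)).prod)⁻¹ := by
    rw [hl1, hl2]
    simp only [List.map_append, List.prod_append, List.map_cons, List.prod_cons,
      revprod]
    group
  rw [← key]
  exact mul_mem (memK k l1 h1nd h1len) (memK k l2 h2nd h2len)

/-- commutators of a generator with nodup words lie in K -/
lemma commK (k : ℕ) (m : Fin k) :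
    ∀ Q : List (Fin k), Q.Nodup → m ∉ Q →
      g k m * (Q.map (g k)).prod * g k m * ((Q.map (g k)).prod)⁻¹ ∈ Kk k := by
  intro Q
  induction Q using List.reverseRecOn with
  | nil =>
    intro _ _
    simp only [List.map_nil, List.prod_nil, mul_one, inv_one]
    rw [g_sq]
    exact one_mem _
  | append_singleton Q' a ih =>
    intro hnd hm
    have hQ'nd : Q'.Nodup := hnd.of_append_left
    have haQ' : a ∉ Q' := by
      rw [List.nodup_append] at hnd
      intro hmem
      exact hnd.2.2 a hmem a (by simp) rfl
    have hmQ' : m ∉ Q' := fun h => hm (List.mem_append_left _ h)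
    have hma : m ≠ a := by
      intro h; exact hm (by simp [h])
    have key : g k m * ((Q' ++ [a]).map (g k)).prod * g k m *
        (((Q' ++ [a]).map (g k)).prod)⁻¹ =
        (g k m * (Q'.map (g k)).prod * g k m * ((Q'.map (g k)).prod)⁻¹) *
          ((Q'.map (g k)).prod * (g k m * g k a * g k m * g k a) *
            ((Q'.map (g k)).prod)⁻¹) := by
      simp only [List.map_append, List.prod_append, List.map_cons, List.prod_cons,
        List.map_nil, List.prod_nil, mul_one, mul_inv_rev, g_inv, mul_assoc,
        inv_mul_cancel_left, mul_inv_cancel_left, g_mul_g]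
    rw [key]
    exact mul_mem (ih hQ'nd hmQ') (conjComm k Q' m a hma hQ'nd hmQ' haQ')

/-- conjugates of K-generators by generators of H lie in K -/
lemma conjGen (k : ℕ) (l : List (Fin k)) (h1 : l.Nodup) (h2 : l.length = k) (m : Fin k) :
    g k m * (l.map (g k)).prod * g k m ∈ Kk k := by
  have hm : m ∈ l := mem_of_full k h1 h2 m
  obtain ⟨P, Q, rfl⟩ := List.append_of_mem hm
  have hperm : (m :: (P ++ Q)).Perm (P ++ m :: Q) := List.perm_middle.symm
  have hnd' : (m :: (P ++ Q)).Nodup := hperm.nodup_iff.2 h1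
  have hlen' : (m :: (P ++ Q)).length = k := hperm.length_eq.trans h2
  have hQnd : Q.Nodup := (List.nodup_cons.1 ((List.nodup_append.1 h1).2.1)).2
  have hmQ : m ∉ Q := (List.nodup_cons.1 ((List.nodup_append.1 h1).2.1)).1
  have key : g k m * ((P ++ m :: Q).map (g k)).prod * g k m =
      ((m :: (P ++ Q)).map (g k)).prod *
        (g k m * ((Q.reverse).map (g k)).prod * g k m *
          (((Q.reverse).map (g k)).prod)⁻¹)⁻¹ := by
    simp only [List.map_append, List.prod_append, List.map_cons, List.prod_cons,
      revprod, mul_inv_rev, inv_inv, g_inv, mul_assoc, inv_mul_cancel_left,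
      mul_inv_cancel_left, g_mul_g]
  rw [key]
  exact mul_mem (memK k _ hnd' hlen')
    (inv_mem (commK k m Q.reverse (List.nodup_reverse.2 hQnd) (by simpa using hmQ)))

lemma conj_mem (k : ℕ) (i : Fin k) {x : Gnk k} (hx : x ∈ Kk k) :
    g k i * x * (g k i)⁻¹ ∈ Kk k := by
  rw [Kk] at hx
  refine Subgroup.closure_induction
    (p := fun x _ => g k i * x * (g k i)⁻¹ ∈ Kk k) ?_ ?_ ?_ ?_ hx
  · rintro x ⟨σ, rfl⟩
    have he : (List.ofFn fun j : Fin k =>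
        PresentedGroup.of (rels := relsG k) (Fin.castSucc (σ j)))
        = (List.ofFn σ).map (g k) := by
      apply List.ext_getElem
      · simp
      · intro n hn1 hn2
        simp [g]
    show g k i * (List.ofFn fun j : Fin k =>
        PresentedGroup.of (rels := relsG k) (Fin.castSucc (σ j))).prod * (g k i)⁻¹ ∈ Kk k
    rw [he, g_inv]
    exact conjGen k (List.ofFn σ) (List.nodup_ofFn.2 σ.injective) List.length_ofFn i
  · simpa using one_mem (Kk k)
  · intro x y _ _ hx hy
    have : g k i * (x * y) * (g k i)⁻¹ =
        (g k i * x * (g k i)⁻¹) * (g k i * y * (g k i)⁻¹) := by group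
    rw [this]
    exact mul_mem hx hy
  · intro x _ hx
    have : g k i * x⁻¹ * (g k i)⁻¹ = (g k i * x * (g k i)⁻¹)⁻¹ := by group
    rw [this]
    exact inv_mem hx

lemma H_le_norm (k : ℕ) : Hk k ≤ Subgroup.normalizer (Kk k : Set (Gnk k)) := by
  rw [Hk, Subgroup.closure_le]
  rintro _ ⟨i, rfl⟩
  show g k i ∈ Subgroup.normalizer (Kk k : Set (Gnk k))
  rw [Subgroup.mem_normalizer_iff]
  intro h
  constructor
  · exact fun hh => conj_mem k i hh
  · intro hh
    have h2 := conj_mem k i hh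
    have e : g k i * (g k i * h * (g k i)⁻¹) * (g k i)⁻¹ =
        (g k i * g k i) * h * ((g k i * g k i))⁻¹ := by group
    rw [e, g_sq] at h2
    simpa using h2

lemma hconj (k : ℕ) {h x : Gnk k} (hh : h ∈ Hk k) (hx : x ∈ Kk k) :
    h * x * h⁻¹ ∈ Kk k :=
  (Subgroup.mem_normalizer_iff.1 (H_le_norm k hh) x).1 hx

theorem main (k : ℕ) : ⁅Hk k, Hk k⁆ ≤ Kk k := by
  rw [Subgroup.commutator_le]
  intro x hx y hy
  rw [Hk] at hx
  refine Subgroup.closure_induction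
    (p := fun x _ => ∀ y, y ∈ Hk k → ⁅x, y⁆ ∈ Kk k) ?_ ?_ ?_ ?_ hx y hy
  · rintro _ ⟨i, rfl⟩ y hy
    rw [Hk] at hy
    refine Subgroup.closure_induction
      (p := fun y hy => ⁅(PresentedGroup.of (rels := relsG k) (Fin.castSucc i) : Gnk k), y⁆
        ∈ Kk k) ?_ ?_ ?_ ?_ hy
    · rintro _ ⟨j, rfl⟩
      by_cases hij : i = j
      · subst hij
        simpa using one_mem (Kk k)
      · have h0 := conjComm k [] i j hij List.nodup_nil List.not_mem_nil
          List.not_mem_nil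
        simp only [List.map_nil, List.prod_nil, one_mul, inv_one, mul_one] at h0
        have e : ⁅(PresentedGroup.of (rels := relsG k) (Fin.castSucc i) : Gnk k),
            PresentedGroup.of (rels := relsG k) (Fin.castSucc j)⁆
            = g k i * g k j * g k i * g k j := by
          rw [commutatorElement_def]
          show g k i * g k j * (g k i)⁻¹ * (g k j)⁻¹ = _
          rw [g_inv, g_inv]
        rw [e]
        exact h0
    · simpa using one_mem (Kk k)
    · intro y z hyH hzH hy hz
      have hyH' : y ∈ Hk k := by rw [Hk]; exact hyH
      have e : ⁅(PresentedGroup.of (rels := relsG k) (Fin.castSucc i) : Gnk k), y * z⁆ =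
          ⁅(PresentedGroup.of (rels := relsG k) (Fin.castSucc i) : Gnk k), y⁆ *
            (y * ⁅(PresentedGroup.of (rels := relsG k) (Fin.castSucc i) : Gnk k), z⁆ * y⁻¹) := by
        simp only [commutatorElement_def]; group
      rw [e]
      exact mul_mem hy (hconj k hyH' hz)
    · intro y hyH hy
      have hyH' : y ∈ Hk k := by rw [Hk]; exact hyH
      have e : ⁅(PresentedGroup.of (rels := relsG k) (Fin.castSucc i) : Gnk k), y⁻¹⁆ =
          y⁻¹ * ⁅(PresentedGroup.of (rels := relsG k) (Fin.castSucc i) : Gnk k), y⁆⁻¹ *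
            (y⁻¹)⁻¹ := by
        simp only [commutatorElement_def]; group
      rw [e]
      exact hconj k (inv_mem hyH') (inv_mem hy)
  · intro y _
    simpa using one_mem (Kk k)
  · intro x z hxH hzH hx hz y hyH
    have hxH' : x ∈ Hk k := by rw [Hk]; exact hxH
    have e : ⁅x * z, y⁆ = x * ⁅z, y⁆ * x⁻¹ * ⁅x, y⁆ := by
      simp only [commutatorElement_def]; group
    rw [e]
    exact mul_mem (hconj k hxH' (hz y hyH)) (hx y hyH)
  · intro x hxH hx y hyH
    have hxH' : x ∈ Hk k := by rw [Hk]; exact hxH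
    have e : ⁅x⁻¹, y⁆ = x⁻¹ * ⁅x, y⁆⁻¹ * (x⁻¹)⁻¹ := by
      simp only [commutatorElement_def]; group
    rw [e]
    exact hconj k (inv_mem hxH') (inv_mem (hx y hyH))

end Stmt10Aux

/-- For every `k ≥ 2`, the subgroup `K_k` of `G_{k+1}^k` contains the commutator
subgroup of `H_k`; that is, `⁅H_k, H_k⁆ ≤ K_k`. -/
theorem stmt_10 (k : ℕ) (hk : 2 ≤ k) : ⁅Hk k, Hk k⁆ ≤ Kk k :=
  Stmt10Aux.main k
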